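/- Greedy maximal-cardinality invariance: let T be a trajectory, Δ ≥ 0, and P a fixed subtrajectory of T. Let ℐ be the set of all intervals [x, y] ⊆ [1, n] with D_F(P, T[x, y]) ≤ Δ. Assume ℐ is closed under the operation: if [x, y] ∈ ℐ and there is [x', y] ∈ ℐ with x' > x, the maximal such x' also gives [x', y] ∈ ℐ. Then the maximum number of pairwise disjoint intervals selectable from ℐ equals the number produced by scanning y from n downward and greedily taking, for the largest feasible y, the interval [x*, y] with maximal left endpoint x*, then continuing below x*. -/

import Mathlib

/-- One step of a discrete walk: each coordinate stays or decreases by one. -/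
def Step (p q : ℕ × ℕ) : Prop :=
  (q.1 = p.1 ∨ q.1 + 1 = p.1) ∧ (q.2 = p.2 ∨ q.2 + 1 = p.2)

/-- A discrete walk from `(x, y)` down to `(1, 1)`. -/
def IsWalk (F : List (ℕ × ℕ)) (x y : ℕ) : Prop :=
  F.head? = some (x, y) ∧ F.getLast? = some (1, 1) ∧ List.Chain' Step F

/-- The cost of a discrete walk: maximum pointwise distance along the walk. -/
noncomputable def walkCost (P Q : ℕ → ℝ × ℝ) (F : List (ℕ × ℕ)) : ℝ :=
  (F.map fun p => dist (P p.1) (Q p.2)).foldr max 0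

/-- The discrete Fréchet distance between the sequences `P 1, …, P x` and `Q 1, …, Q y`. -/
noncomputable def dF (P : ℕ → ℝ × ℝ) (x : ℕ) (Q : ℕ → ℝ × ℝ) (y : ℕ) : ℝ :=
  sInf {c | ∃ F, IsWalk F x y ∧ walkCost P Q F = c}

/-- The subtrajectory of `T` starting at index `a`, reindexed from `1`. -/
def subtraj (T : ℕ → ℝ × ℝ) (a : ℕ) : ℕ → ℝ × ℝ := fun i => T (a + i - 1)

open Classical in
/-- The right-to-left greedy scan over an interval family Iv: scanning the right endpoint
y downwards, at the largest feasible y take the interval (x*, y) with maximal left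
endpoint x*, then continue below x*. -/
noncomputable def greedyScan (Iv : Set (ℕ × ℕ)) : ℕ → Finset (ℕ × ℕ)
  | 0 => ∅
  | (y + 1) =>
    if _h : ∃ x, (x, y + 1) ∈ Iv then
      insert (Nat.findGreatest (fun x => (x, y + 1) ∈ Iv) (y + 1), y + 1)
        (greedyScan Iv (Nat.findGreatest (fun x => (x, y + 1) ∈ Iv) (y + 1) - 1))
    else greedyScan Iv y
  decreasing_by
  · have := Nat.findGreatest_le (P := fun x => (x, y + 1) ∈ Iv) (y + 1)
    omega
  · omega

section Helpers

lemma foldr_max_nonneg (l : List ℝ) : 0 ≤ l.foldr max 0 := by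
  induction l with
  | nil => simp
  | cons x t ih => simpa using Or.inr ih

lemma le_foldr_max {l : List ℝ} {x : ℝ} (h : x ∈ l) : x ≤ l.foldr max 0 := by
  induction l with
  | nil => simp at h
  | cons a t ih =>
    rcases List.mem_cons.1 h with rfl | h
    · exact le_max_left _ _
    · exact le_trans (ih h) (le_max_right _ _)

lemma foldr_max_le {l : List ℝ} {c : ℝ} (h0 : 0 ≤ c) (h : ∀ x ∈ l, x ≤ c) :
    l.foldr max 0 ≤ c := by
  induction l with
  | nil => simpa
  | cons a t ih =>
    exact max_le (h a (by simp)) (ih fun x hx => h x (by simp [hx]))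

lemma foldr_max_mem (l : List ℝ) : l.foldr max 0 = 0 ∨ l.foldr max 0 ∈ l := by
  induction l with
  | nil => simp
  | cons a t ih =>
    rcases max_choice a (t.foldr max 0) with h | h
    · right; simp [List.foldr_cons, h]
    · rcases ih with h' | h'
      · left; rw [List.foldr_cons, h, h']
      · right; simp only [List.foldr_cons, h]; exact List.mem_cons_of_mem _ h'

lemma walk_bounds : ∀ (W : List (ℕ×ℕ)) (a b : ℕ×ℕ), List.Chain' Step W →
    W.head? = some a → W.getLast? = some b →
    ∀ p ∈ W, (b.1 ≤ p.1 ∧ b.2 ≤ p.2) ∧ (p.1 ≤ a.1 ∧ p.2 ≤ a.2) := by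
  intro W
  induction W with
  | nil => intro a b _ h; simp at h
  | cons x t ih =>
    intro a b hc hh hl p hp
    simp only [List.head?_cons, Option.some.injEq] at hh
    subst hh
    match t with
    | [] =>
      simp only [List.getLast?_singleton, Option.some.injEq] at hl
      subst hl
      simp only [List.mem_singleton] at hp
      subst hp; omega
    | y :: t' =>
      rw [List.getLast?_cons_cons] at hl
      rw [List.Chain', List.isChain_cons_cons] at hc
      have hyb := ih y b hc.2 rfl hl y (by simp)
      have hstep := hc.1
      rcases List.mem_cons.1 hp with rfl | hp
      · refine ⟨⟨?_, ?_⟩, le_refl _, le_refl _⟩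
        · have := hyb.1.1; rcases hstep.1 with h | h <;> omega
        · have := hyb.1.2; rcases hstep.2 with h | h <;> omega
      · have := ih y b hc.2 rfl hl p hp
        rcases hstep.1 with h1 | h1 <;> rcases hstep.2 with h2 | h2 <;> omega

lemma exists_walk : ∀ (N x y : ℕ), x + y ≤ N → 1 ≤ x → 1 ≤ y → ∃ F, IsWalk F x y := by
  intro N
  induction N with
  | zero => intro x y h hx hy; omega
  | succ N ih =>
    intro x y h hx hy
    by_cases hx1 : x = 1
    · by_cases hy1 : y = 1
      · subst hx1; subst hy1
        exact ⟨[(1,1)], rfl, rfl, List.isChain_singleton _⟩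
      · obtain ⟨F, h1, h2, h3⟩ := ih x (y - 1) (by omega) hx (by omega)
        refine ⟨(x, y) :: F, rfl, ?_, ?_⟩
        · rw [List.getLast?_cons, h2]
          cases F <;> simp_all
        · rw [List.Chain', List.isChain_cons]
          refine ⟨?_, h3⟩
          intro h hh
          have : F.head? = some (x, y - 1) := h1
          rw [this] at hh
          simp only [Option.mem_def, Option.some.injEq] at hh
          subst hh
          constructor
          · left; rfl
          · right; omega
    · obtain ⟨F, h1, h2, h3⟩ := ih (x - 1) y (by omega) (by omega) hy
      refine ⟨(x, y) :: F, rfl, ?_, ?_⟩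
      · rw [List.getLast?_cons, h2]
        cases F <;> simp_all
      · rw [List.Chain', List.isChain_cons]
        refine ⟨?_, h3⟩
        intro h hh
        rw [h1] at hh
        simp only [Option.mem_def, Option.some.injEq] at hh
        subst hh
        exact ⟨Or.inr (by omega), Or.inl rfl⟩

end Helpers

section DF

lemma walkCost_nonneg (P Q : ℕ → ℝ × ℝ) (F : List (ℕ×ℕ)) : 0 ≤ walkCost P Q F :=
  foldr_max_nonneg _

lemma bddBelow_costs (P Q : ℕ → ℝ × ℝ) (x y : ℕ) :
    BddBelow {c | ∃ F, IsWalk F x y ∧ walkCost P Q F = c} := by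
  refine ⟨0, fun c hc => ?_⟩
  obtain ⟨F, _, rfl⟩ := hc
  exact walkCost_nonneg P Q F

lemma dF_le_of_walk {P Q : ℕ → ℝ × ℝ} {x y : ℕ} {F : List (ℕ×ℕ)} {Δ : ℝ}
    (h : IsWalk F x y) (hc : walkCost P Q F ≤ Δ) : dF P x Q y ≤ Δ :=
  le_trans (csInf_le (bddBelow_costs P Q x y) ⟨F, h, rfl⟩) hc

lemma walkCost_pointwise {P Q : ℕ → ℝ × ℝ} {F : List (ℕ×ℕ)} {Δ : ℝ}
    (hc : walkCost P Q F ≤ Δ) : ∀ p ∈ F, dist (P p.1) (Q p.2) ≤ Δ := by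
  intro p hp
  have : dist (P p.1) (Q p.2) ∈ F.map fun p => dist (P p.1) (Q p.2) :=
    List.mem_map_of_mem hp
  exact le_trans (le_foldr_max this) hc

lemma exists_walk_cost {P Q : ℕ → ℝ × ℝ} {x y : ℕ} {Δ : ℝ} (hx : 1 ≤ x) (hy : 1 ≤ y)
    (h : dF P x Q y ≤ Δ) : ∃ F, IsWalk F x y ∧ walkCost P Q F ≤ Δ := by
  set S := {c | ∃ F, IsWalk F x y ∧ walkCost P Q F = c} with hS
  have hne : S.Nonempty := by
    obtain ⟨F, hF⟩ := exists_walk (x + y) x y le_rfl hx hy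
    exact ⟨walkCost P Q F, F, hF, rfl⟩
  have hfin : S.Finite := by
    refine Set.Finite.subset (Set.Finite.insert 0
      (Set.finite_range (fun p : Finset.Icc (1,1) (x,y) =>
        dist (P (p : ℕ×ℕ).1) (Q (p : ℕ×ℕ).2)))) ?_
    rintro c ⟨F, ⟨hh, hl, hch⟩, rfl⟩
    rcases foldr_max_mem (F.map fun p => dist (P p.1) (Q p.2)) with h0 | hmem
    · rw [walkCost, h0]; exact Set.mem_insert _ _
    · obtain ⟨p, hp, hpc⟩ := List.mem_map.1 hmem
      have hb := walk_bounds F (x,y) (1,1) hch hh hl p hp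
      right
      exact ⟨⟨p, Finset.mem_Icc.2 ⟨⟨hb.1.1, hb.1.2⟩, ⟨hb.2.1, hb.2.2⟩⟩⟩, hpc⟩
  have hmem := Set.Nonempty.csInf_mem hne hfin
  obtain ⟨F, hF, hc⟩ := hmem
  refine ⟨F, hF, le_of_eq_of_le hc ?_⟩
  exact h

end DF

section Merge

lemma cons_of_head? {α : Type*} {l : List α} {a : α} (h : l.head? = some a) :
    ∃ t, l = a :: t := by
  cases l with
  | nil => simp at h
  | cons x t =>
    simp only [List.head?_cons, Option.some.injEq] at h
    exact ⟨t, by rw [h]⟩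

lemma merge_walks : ∀ (N : ℕ) (W1 W2 : List (ℕ×ℕ)) (a b c d : ℕ×ℕ),
    W1.length + W2.length ≤ N →
    W1.head? = some a → W1.getLast? = some b → List.Chain' Step W1 →
    W2.head? = some c → W2.getLast? = some d → List.Chain' Step W2 →
    a.1 = c.1 → c.2 ≤ a.2 → b.1 = d.1 → b.2 ≤ d.2 →
    ∃ W : List (ℕ×ℕ), W.head? = some a ∧ W.getLast? = some d ∧ List.Chain' Step W ∧
      ∀ p ∈ W, p ∈ W1 ∨ p ∈ W2 := by
  intro N
  induction N with
  | zero =>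
    intro W1 W2 a b c d hN h1 _ _ _ _ _ _ _ _ _
    cases W1 <;> simp_all
  | succ N ih =>
    intro W1 W2 a b c d hN h1h h1l h1c h2h h2l h2c hrow hcol hbrow hbcol
    by_cases hac : a = c
    · exact ⟨W2, by rw [h2h, hac], h2l, h2c, fun p hp => Or.inr hp⟩
    · have hclt : c.2 < a.2 := by
        rcases lt_or_eq_of_le hcol with h | h
        · exact h
        · exact absurd (Prod.ext hrow h.symm) hac
      obtain ⟨s1, rfl⟩ := cons_of_head? h1h
      obtain ⟨s2, rfl⟩ := cons_of_head? h2h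
      have hcW2 : c ∈ c :: s2 := by simp
      match s1 with
      | [] =>
        -- a = b; but b.2 ≤ d.2 ≤ c.2 < a.2
        simp only [List.getLast?_singleton, Option.some.injEq] at h1l
        subst h1l
        have := (walk_bounds (c :: s2) c d h2c rfl h2l c hcW2).1.2
        omega
      | q :: t1 =>
        rw [List.getLast?_cons_cons] at h1l
        rw [List.Chain', List.isChain_cons_cons] at h1c
        obtain ⟨hstep1, h1c'⟩ := h1c
        rcases hstep1.1 with hq1 | hq1
        · -- q stays at same row: advance W1
          obtain ⟨W, hWh, hWl, hWc, hWm⟩ := ih (q :: t1) (c :: s2) q b c d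
            (by simp at hN ⊢; omega)
            rfl h1l h1c' rfl h2l h2c (by omega)
            (by rcases hstep1.2 with h | h <;> omega) hbrow hbcol
          obtain ⟨W', rfl⟩ := cons_of_head? hWh
          refine ⟨a :: q :: W', rfl, ?_, ?_, ?_⟩
          · rw [List.getLast?_cons_cons]; exact hWl
          · rw [List.Chain', List.isChain_cons_cons]; exact ⟨hstep1, hWc⟩
          · intro r hr
            rcases List.mem_cons.1 hr with rfl | hr
            · left; simp
            · rcases hWm r hr with h | h
              · left; exact List.mem_cons_of_mem _ h
              · right; exact h
        · -- q drops a row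
          match s2 with
          | [] =>
            simp only [List.getLast?_singleton, Option.some.injEq] at h2l
            subst h2l
            -- c = d, so b.1 = c.1 = a.1, but walk q::t1 ends at b with b.1 ≤ q.1 = a.1 - 1
            have hqm : q ∈ q :: t1 := by simp
            have := (walk_bounds (q :: t1) q b h1c' rfl h1l q hqm).1.1
            omega
          | v :: t2 =>
            rw [List.getLast?_cons_cons] at h2l
            rw [List.Chain', List.isChain_cons_cons] at h2c
            obtain ⟨hstep2, h2c'⟩ := h2c
            rcases hstep2.1 with hv1 | hv1
            · -- v stays at same row: advance W2
              obtain ⟨W, hWh, hWl, hWc, hWm⟩ := ih (a :: q :: t1) (v :: t2) a b v d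
                (by simp at hN ⊢; omega) rfl (by rw [List.getLast?_cons_cons]; exact h1l)
                (by rw [List.Chain', List.isChain_cons_cons]; exact ⟨hstep1, h1c'⟩) rfl h2l h2c'
                (by omega) (by rcases hstep2.2 with h | h <;> omega) hbrow hbcol
              refine ⟨W, hWh, hWl, hWc, ?_⟩
              intro r hr
              rcases hWm r hr with h | h
              · left; exact h
              · right; exact List.mem_cons_of_mem _ h
            · -- both drop a row: advance both
              obtain ⟨W, hWh, hWl, hWc, hWm⟩ := ih (q :: t1) (v :: t2) q b v d
                (by simp at hN ⊢; omega) rfl h1l h1c' rfl h2l h2c'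
                (by omega)
                (by rcases hstep1.2 with h | h <;> rcases hstep2.2 with h' | h' <;> omega)
                hbrow hbcol
              obtain ⟨W', rfl⟩ := cons_of_head? hWh
              refine ⟨a :: q :: W', rfl, ?_, ?_, ?_⟩
              · rw [List.getLast?_cons_cons]; exact hWl
              · rw [List.Chain', List.isChain_cons_cons]; exact ⟨hstep1, hWc⟩
              · intro r hr
                rcases List.mem_cons.1 hr with rfl | hr
                · left; simp
                · rcases hWm r hr with h | h
                  · left; exact List.mem_cons_of_mem _ h
                  · right; exact List.mem_cons_of_mem _ h

end Merge

section Splice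

lemma chain'_shift_up (s : ℕ) {W : List (ℕ×ℕ)} (h : List.Chain' Step W) :
    List.Chain' Step (W.map fun p => (p.1, p.2 + s)) := by
  unfold List.Chain' at h ⊢
  rw [List.isChain_map]
  refine h.imp ?_
  rintro ⟨a1, a2⟩ ⟨b1, b2⟩ ⟨h1, h2⟩
  exact ⟨h1, by omega⟩

lemma chain'_shift_down (s : ℕ) : ∀ (W : List (ℕ×ℕ)), List.Chain' Step W →
    (∀ p ∈ W, s ≤ p.2) →
    List.Chain' Step (W.map fun p => (p.1, p.2 - s)) := by
  intro W
  induction W with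
  | nil => intro _ _; exact List.isChain_nil
  | cons x t ih =>
    intro hc hb
    match t with
    | [] => exact List.isChain_singleton _
    | y :: t' =>
      rw [List.Chain', List.isChain_cons_cons] at hc
      simp only [List.map_cons] at *
      rw [List.Chain', List.isChain_cons_cons]
      refine ⟨?_, ih hc.2 fun p hp => hb p (List.mem_cons_of_mem _ hp)⟩
      obtain ⟨h1, h2⟩ := hc.1
      have hy : s ≤ y.2 := hb y (by simp)
      exact ⟨h1, by omega⟩

lemma splice_mem (T P : ℕ → ℝ × ℝ) (n ℓ : ℕ) (hℓ : 1 ≤ ℓ) (Δ : ℝ)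
    (Iv : Set (ℕ × ℕ))
    (hI : Iv = {p : ℕ × ℕ | 1 ≤ p.1 ∧ p.1 ≤ p.2 ∧ p.2 ≤ n ∧
      dF P ℓ (subtraj T p.1) (p.2 - p.1 + 1) ≤ Δ}) :
    ∀ a b x y : ℕ, (a, b) ∈ Iv → (x, y) ∈ Iv → b ≤ y → x < a → (a, y) ∈ Iv := by
  subst hI
  intro a b x y hab hxy hby hxa
  obtain ⟨ha1, hab', hbn, hdfa⟩ := hab
  obtain ⟨hx1, hxy', hyn, hdfx⟩ := hxy
  simp only at ha1 hab' hbn hdfa hx1 hxy' hyn hdfx ⊢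
  obtain ⟨F2, hF2walk, hF2cost⟩ := exists_walk_cost hℓ (by omega) hdfa
  obtain ⟨F1, hF1walk, hF1cost⟩ := exists_walk_cost hℓ (by omega) hdfx
  have hΔ0 : 0 ≤ Δ := le_trans (walkCost_nonneg _ _ F2) hF2cost
  obtain ⟨h2h, h2l, h2c⟩ := hF2walk
  obtain ⟨h1h, h1l, h1c⟩ := hF1walk
  -- globalize
  set G1 := F1.map (fun p => (p.1, p.2 + (x - 1))) with hG1
  set G2 := F2.map (fun p => (p.1, p.2 + (a - 1))) with hG2
  have hG1h : G1.head? = some (ℓ, y) := by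
    rw [hG1, List.head?_map, h1h]
    simp only [Option.map_some]
    congr 2
    omega
  have hG1l : G1.getLast? = some (1, x) := by
    rw [hG1, List.getLast?_map, h1l]
    simp only [Option.map_some]
    congr 2
    omega
  have hG1c : List.Chain' Step G1 := chain'_shift_up _ h1c
  have hG2h : G2.head? = some (ℓ, b) := by
    rw [hG2, List.head?_map, h2h]
    simp only [Option.map_some]
    congr 2
    omega
  have hG2l : G2.getLast? = some (1, a) := by
    rw [hG2, List.getLast?_map, h2l]
    simp only [Option.map_some]
    congr 2
    omega
  have hG2c : List.Chain' Step G2 := chain'_shift_up _ h2c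
  have hG1pt : ∀ p ∈ G1, dist (P p.1) (T p.2) ≤ Δ := by
    rintro p hp
    obtain ⟨q, hq, rfl⟩ := List.mem_map.1 hp
    have := walkCost_pointwise hF1cost q hq
    have heq : subtraj T x q.2 = T (q.2 + (x - 1)) := by
      unfold subtraj
      congr 1
      omega
    rw [heq] at this
    exact this
  have hG2pt : ∀ p ∈ G2, dist (P p.1) (T p.2) ≤ Δ := by
    rintro p hp
    obtain ⟨q, hq, rfl⟩ := List.mem_map.1 hp
    have := walkCost_pointwise hF2cost q hq
    have heq : subtraj T a q.2 = T (q.2 + (a - 1)) := by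
      unfold subtraj
      congr 1
      omega
    rw [heq] at this
    exact this
  -- merge
  obtain ⟨W, hWh, hWl, hWc, hWm⟩ := merge_walks (G1.length + G2.length) G1 G2
    (ℓ, y) (1, x) (ℓ, b) (1, a) le_rfl hG1h hG1l hG1c hG2h hG2l hG2c
    rfl hby rfl (le_of_lt hxa)
  have hWpt : ∀ p ∈ W, dist (P p.1) (T p.2) ≤ Δ := by
    intro p hp
    rcases hWm p hp with h | h
    · exact hG1pt p h
    · exact hG2pt p h
  have hWbd := walk_bounds W (ℓ, y) (1, a) hWc hWh hWl
  -- localize at a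
  set W' := W.map (fun p => (p.1, p.2 - (a - 1))) with hW'
  have hW'walk : IsWalk W' ℓ (y - a + 1) := by
    refine ⟨?_, ?_, ?_⟩
    · rw [hW', List.head?_map, hWh]
      simp only [Option.map_some]
      congr 2
      omega
    · rw [hW', List.getLast?_map, hWl]
      simp only [Option.map_some]
      congr 2
      omega
    · exact chain'_shift_down _ W hWc fun p hp => by have := (hWbd p hp).1.2; simp at this; omega
  have hW'cost : walkCost P (subtraj T a) W' ≤ Δ := by
    refine foldr_max_le hΔ0 ?_
    intro v hv
    obtain ⟨p, hp, rfl⟩ := List.mem_map.1 hv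
    rw [hW'] at hp
    obtain ⟨q, hq, rfl⟩ := List.mem_map.1 hp
    have hqa : a ≤ q.2 := by have := (hWbd q hq).1.2; simpa using this
    have heq : subtraj T a (q.2 - (a - 1)) = T q.2 := by
      unfold subtraj
      congr 1
      omega
    simp only [heq]
    exact hWpt q hq
  refine ⟨ha1, by omega, by omega, dF_le_of_walk hW'walk hW'cost⟩

end Splice

section Greedy

open Classical in
lemma greedyScan_succ_pos (Iv : Set (ℕ×ℕ)) (y : ℕ) (h : ∃ x, (x, y+1) ∈ Iv) :
    greedyScan Iv (y+1) = insert (Nat.findGreatest (fun x => (x, y + 1) ∈ Iv) (y + 1), y + 1)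
        (greedyScan Iv (Nat.findGreatest (fun x => (x, y + 1) ∈ Iv) (y + 1) - 1)) := by
  rw [greedyScan, dif_pos h]

lemma greedyScan_succ_neg (Iv : Set (ℕ×ℕ)) (y : ℕ) (h : ¬ ∃ x, (x, y+1) ∈ Iv) :
    greedyScan Iv (y+1) = greedyScan Iv y := by
  rw [greedyScan, dif_neg h]

lemma greedyScan_zero (Iv : Set (ℕ×ℕ)) : greedyScan Iv 0 = ∅ := by rw [greedyScan]

lemma greedy_valid (Iv : Set (ℕ×ℕ)) (H1 : ∀ p ∈ Iv, 1 ≤ p.1 ∧ p.1 ≤ p.2) :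
    ∀ m : ℕ, (∀ p ∈ greedyScan Iv m, p ∈ Iv ∧ p.2 ≤ m) ∧
      (∀ p ∈ greedyScan Iv m, ∀ q ∈ greedyScan Iv m, p ≠ q →
        Disjoint (Finset.Icc p.1 p.2) (Finset.Icc q.1 q.2)) := by
  intro m
  induction m using Nat.strong_induction_on with
  | _ m ih =>
    classical
    match m with
    | 0 => rw [greedyScan_zero]; simp
    | y + 1 =>
      by_cases h : ∃ x, (x, y+1) ∈ Iv
      · rw [greedyScan_succ_pos Iv y h]
        set xs := Nat.findGreatest (fun x => (x, y + 1) ∈ Iv) (y + 1) with hxs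
        obtain ⟨x0, hx0⟩ := h
        have hx0le : x0 ≤ y + 1 := (H1 _ hx0).2
        have hxsmem : (xs, y + 1) ∈ Iv := Nat.findGreatest_spec (P := fun x => (x, y + 1) ∈ Iv) hx0le hx0
        have hxs1 : 1 ≤ xs := le_trans (H1 _ hxsmem).1 le_rfl
        have hxsle : xs ≤ y + 1 := Nat.findGreatest_le (y + 1)
        have ihx := ih (xs - 1) (by omega)
        constructor
        · intro p hp
          rcases Finset.mem_insert.1 hp with rfl | hp
          · exact ⟨hxsmem, le_rfl⟩
          · obtain ⟨h1, h2⟩ := ihx.1 p hp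
            exact ⟨h1, by omega⟩
        · intro p hp q hq hpq
          rcases Finset.mem_insert.1 hp with rfl | hp <;>
            rcases Finset.mem_insert.1 hq with rfl | hq
          · exact absurd rfl hpq
          · have hq2 : q.2 ≤ xs - 1 := (ihx.1 q hq).2
            rw [Finset.disjoint_left]
            intro k hk hk'
            simp only [Finset.mem_Icc] at hk hk'
            omega
          · have hp2 : p.2 ≤ xs - 1 := (ihx.1 p hp).2
            rw [Finset.disjoint_left]
            intro k hk hk'
            simp only [Finset.mem_Icc] at hk hk'
            omega
          · exact ihx.2 p hp q hq hpq
      · rw [greedyScan_succ_neg Iv y h]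
        obtain ⟨ih1, ih2⟩ := ih y (by omega)
        exact ⟨fun p hp => ⟨(ih1 p hp).1, by have := (ih1 p hp).2; omega⟩, ih2⟩

lemma greedy_ub (Iv : Set (ℕ×ℕ)) (H1 : ∀ p ∈ Iv, 1 ≤ p.1 ∧ p.1 ≤ p.2)
    (H2 : ∀ a b x y : ℕ, (a, b) ∈ Iv → (x, y) ∈ Iv → b ≤ y → x < a → (a, y) ∈ Iv) :
    ∀ m : ℕ, ∀ J : Finset (ℕ×ℕ), (↑J : Set (ℕ×ℕ)) ⊆ Iv → (∀ p ∈ J, p.2 ≤ m) →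
      (∀ p ∈ J, ∀ q ∈ J, p ≠ q → Disjoint (Finset.Icc p.1 p.2) (Finset.Icc q.1 q.2)) →
      J.card ≤ (greedyScan Iv m).card := by
  intro m
  induction m using Nat.strong_induction_on with
  | _ m ih =>
    classical
    match m with
    | 0 =>
      intro J hJ hJm hJd
      have : J = ∅ := by
        rw [Finset.eq_empty_iff_forall_notMem]
        intro p hp
        have h1 := H1 p (hJ hp)
        have h2 := hJm p hp
        omega
      simp [this]
    | y + 1 =>
      intro J hJ hJm hJd
      by_cases h : ∃ x, (x, y+1) ∈ Iv
      · rw [greedyScan_succ_pos Iv y h]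
        set xs := Nat.findGreatest (fun x => (x, y + 1) ∈ Iv) (y + 1) with hxs
        obtain ⟨x0, hx0⟩ := h
        have hx0le : x0 ≤ y + 1 := (H1 _ hx0).2
        have hxsmem : (xs, y + 1) ∈ Iv := Nat.findGreatest_spec (P := fun x => (x, y + 1) ∈ Iv) hx0le hx0
        have hxs1 : 1 ≤ xs := (H1 _ hxsmem).1
        have hxsle : xs ≤ y + 1 := Nat.findGreatest_le (y + 1)
        have hvalid := greedy_valid Iv H1 (xs - 1)
        have hnotmem : (xs, y + 1) ∉ greedyScan Iv (xs - 1) := by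
          intro hmem
          have := (hvalid.1 _ hmem).2
          simp at this
          omega
        rw [Finset.card_insert_of_notMem hnotmem]
        -- split J
        set J1 := J.filter (fun p => p.2 ≤ xs - 1) with hJ1
        set J2 := J.filter (fun p => ¬ p.2 ≤ xs - 1) with hJ2
        have hcard : J1.card + J2.card = J.card :=
          Finset.card_filter_add_card_filter_not _
        have hJ2card : J2.card ≤ 1 := by
          rw [Finset.card_le_one]
          intro p hp q hq
          by_contra hpq
          -- wlog p.2 ≤ q.2
          have key : ∀ u v : ℕ×ℕ, u ∈ J2 → v ∈ J2 → u ≠ v → u.2 ≤ v.2 → False := by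
            intro u v hu hv huv huv2
            simp only [hJ2, Finset.mem_filter] at hu hv
            obtain ⟨huJ, hu2⟩ := hu
            obtain ⟨hvJ, hv2⟩ := hv
            have huIv := hJ huJ
            have hvIv := hJ hvJ
            have hu1 := H1 _ huIv
            have hv1 := H1 _ hvIv
            have hdisj := hJd u huJ v hvJ huv
            -- disjointness forces u.2 < v.1
            have hlt : u.2 < v.1 := by
              by_contra hle
              push_neg at hle
              have hw : max u.1 v.1 ∈ Finset.Icc u.1 u.2 := by
                simp only [Finset.mem_Icc]
                omega
              have hw' : max u.1 v.1 ∈ Finset.Icc v.1 v.2 := by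
                simp only [Finset.mem_Icc]
                omega
              exact Finset.disjoint_left.1 hdisj hw hw'
            -- splice: (v.1, y+1) ∈ Iv, contradicting maximality
            have hv2y : v.2 ≤ y + 1 := hJm v hvJ
            have hvy : (v.1, y + 1) ∈ Iv := by
              have := H2 v.1 v.2 xs (y + 1) (by simpa using hvIv) hxsmem hv2y (by omega)
              exact this
            have : v.1 ≤ xs := Nat.le_findGreatest (by omega) hvy
            omega
          rcases le_total p.2 q.2 with hle | hle
          · exact key p q hp hq hpq hle
          · exact key q p hq hp (Ne.symm hpq) hle
        have hJ1card : J1.card ≤ (greedyScan Iv (xs - 1)).card := by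
          refine ih (xs - 1) (by omega) J1 ?_ ?_ ?_
          · intro p hp
            simp only [hJ1, Finset.coe_filter, Set.mem_setOf_eq] at hp
            exact hJ hp.1
          · intro p hp
            simp only [hJ1, Finset.mem_filter] at hp
            exact hp.2
          · intro p hp q hq hpq
            simp only [hJ1, Finset.mem_filter] at hp hq
            exact hJd p hp.1 q hq.1 hpq
        omega
      · rw [greedyScan_succ_neg Iv y h]
        refine ih y (by omega) J hJ ?_ hJd
        intro p hp
        have hple := hJm p hp
        rcases Nat.lt_or_ge p.2 (y + 1) with hlt | hge
        · omega
        · exfalso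
          have hp2 : p.2 = y + 1 := by omega
          have hmem : p ∈ Iv := hJ hp
          rw [show p = (p.1, y + 1) from Prod.ext rfl hp2] at hmem
          exact h ⟨p.1, hmem⟩

end Greedy

/-- greedy maximal-cardinality invariance: for the family Iv of intervals
[x,y] ⊆ [1,n] with D_F(P, T[x,y]) ≤ Δ (closed under taking the maximal left endpoint for
a given right endpoint), the maximum number of pairwise disjoint intervals selectable
from Iv equals the number produced by the right-to-left greedy scan. -/
theorem greedyScan_max (T P : ℕ → ℝ × ℝ) (n ℓ : ℕ) (hℓ : 1 ≤ ℓ) (Δ : ℝ)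
    (Iv : Set (ℕ × ℕ))
    (hI : Iv = {p : ℕ × ℕ | 1 ≤ p.1 ∧ p.1 ≤ p.2 ∧ p.2 ≤ n ∧
      dF P ℓ (subtraj T p.1) (p.2 - p.1 + 1) ≤ Δ})
    (hclosed : ∀ p ∈ Iv, (∃ x' > p.1, (x', p.2) ∈ Iv) →
      ∃ x', (x', p.2) ∈ Iv ∧ ∀ x'', (x'', p.2) ∈ Iv → x'' ≤ x') :
    IsGreatest {k : ℕ | ∃ J : Finset (ℕ × ℕ), (↑J : Set (ℕ × ℕ)) ⊆ Iv ∧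
        (∀ p ∈ J, ∀ q ∈ J, p ≠ q → Disjoint (Finset.Icc p.1 p.2) (Finset.Icc q.1 q.2)) ∧
        J.card = k}
      (greedyScan Iv n).card := by
  have H1 : ∀ p ∈ Iv, 1 ≤ p.1 ∧ p.1 ≤ p.2 := by
    intro p hp
    rw [hI] at hp
    exact ⟨hp.1, hp.2.1⟩
  have Hn : ∀ p ∈ Iv, p.2 ≤ n := by
    intro p hp
    rw [hI] at hp
    exact hp.2.2.1
  have H2 := splice_mem T P n ℓ hℓ Δ Iv hI
  obtain ⟨hval, hdisj⟩ := greedy_valid Iv H1 n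
  constructor
  · exact ⟨greedyScan Iv n, fun p hp => (hval p hp).1, hdisj, rfl⟩
  · rintro k ⟨J, hJ, hJd, rfl⟩
    exact greedy_ub Iv H1 H2 n J hJ (fun p hp => Hn p (hJ hp)) hJd
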